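/- Let G = (U ∪ V, E) be a bipartite graph in which every vertex of U has degree at least 1 and at most 3. Fix l ≥ 1 and an injective assignment v ↦ x_v of distinct strings x_v of length l over {A, T} to the vertices v ∈ V, and let X = {x_v : v ∈ V} be the probe set. For each u ∈ U, let p_u be the primer obtained by concatenating the Watson-Crick complements comp(x_v) for v ∈ N(u) (in some fixed order) with a single letter C inserted between consecutive blocks, and set E_{p_u} = {G, C}. If U' ⊆ U is such that the set of primers {p_u : u ∈ U'} is strongly 1-decodable with respect to X and the extension sets E_{p_u} = {G, C}, then there exists V' ⊆ V with |V'| = |U'| such that the subgraph of G induced by U' ∪ V' is a matching. -/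

import Mathlib

/-- The DNA alphabet Σ = {A, C, G, T}. -/
inductive Base : Type
  | A | C | G | T
  deriving DecidableEq

/-- Watson-Crick complement of a single base: A ↔ T, C ↔ G. -/
def Base.comp : Base → Base
  | A => T
  | T => A
  | C => G
  | G => C

/-- Watson-Crick complement of a string. -/
def compStr (w : List Base) : List Base := w.map Base.comp

/-- The spectrum `Spec_X(y)`: the probes `x ∈ X` whose Watson-Crick complement is a
contiguous substring (infix) of `y`. -/
def Spec (X : Finset (List Base)) (y : List Base) : Finset (List Base) :=
  X.filter (fun x => compStr x <:+: y)

/-- `Spec_X(p, E) = ⋃_{e ∈ E} Spec_X(p·e)`. -/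
def SpecE (X : Finset (List Base)) (p : List Base) (E : Finset Base) : Finset (List Base) :=
  E.biUnion (fun e => Spec X (p ++ [e]))

/-- A family of primers `p i`, `i ∈ S`, with extension sets `E i`, is strongly
`r`-decodable with respect to the probe set `X` if for every `i ∈ S` the set
`Spec_X(p i) \ ⋃_{j ∈ S, j ≠ i} Spec_X(p j, E j)` has at least `r` elements. -/
def StronglyDecodableFam {ι : Type} [DecidableEq ι] (X : Finset (List Base))
    (S : Finset ι) (p : ι → List Base) (E : ι → Finset Base) (r : ℕ) : Prop :=
  ∀ i ∈ S, r ≤ ((Spec X (p i)) \ ((S.erase i).biUnion (fun j => SpecE X (p j) (E j)))).card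


lemma intercalate_cons_cons (s a : List Base) (t : List (List Base)) (b : List Base) :
    List.intercalate s (a :: b :: t) = a ++ s ++ List.intercalate s (b :: t) := by
  simp [List.intercalate, List.intersperse]

lemma infix_split {w a t : List Base} (hlen : w.length = a.length) (hwC : Base.C ∉ w)
    (h : w <:+: a ++ [Base.C] ++ t) : w = a ∨ w <:+: t := by
  obtain ⟨s, r, hsr⟩ := h
  rcases Nat.lt_or_ge s.length 1 with hs0 | hs1
  · -- s = [], so w = a
    left
    have hs : s = [] := List.eq_nil_of_length_eq_zero (by omega)
    subst hs
    simp only [List.nil_append] at hsr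
    rw [List.append_assoc] at hsr
    exact (List.append_inj hsr hlen).1
  rcases Nat.lt_or_ge a.length s.length with hgt | hle
  · -- w infix of t
    right
    refine ⟨s.drop (a.length + 1), r, ?_⟩
    have key : List.drop (a.length+1) (s ++ w ++ r)
        = s.drop (a.length+1) ++ (w ++ r) := by
      rw [List.append_assoc, List.drop_append,
        show a.length + 1 - s.length = 0 by omega, List.drop_zero]
    have key2 : List.drop (a.length+1) (a ++ [Base.C] ++ t) = t := by
      rw [List.drop_append, List.drop_eq_nil_of_le (by simp)]
      simp
    have : t = s.drop (a.length+1) ++ (w ++ r) := by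
      rw [← key, hsr, key2]
    rw [this, List.append_assoc]
  · -- contradiction: C ∈ w
    exfalso
    apply hwC
    have hilt : a.length < (s ++ w ++ r).length := by rw [hsr]; simp
    have h1 : (s ++ w ++ r)[a.length]'hilt = Base.C := by
      simp only [hsr]
      rw [List.getElem_append_left (show a.length < (a ++ [Base.C]).length by simp)]
      exact List.getElem_concat_length (l := a) (a := Base.C) (i := a.length) rfl (by simp)
    have e1 : (s ++ w ++ r)[a.length]'hilt
        = (s ++ w)[a.length]'(by simp; omega) :=
      List.getElem_append_left (by simp; omega)
    have e2 : (s ++ w)[a.length]'(by simp; omega)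
        = w[a.length - s.length]'(by omega) :=
      List.getElem_append_right hle
    rw [e1, e2] at h1
    exact h1 ▸ List.getElem_mem _

lemma mem_infix_intercalate {a : List Base} {L : List (List Base)} (h : a ∈ L) :
    a <:+: List.intercalate [Base.C] L := by
  induction L with
  | nil => simp at h
  | cons b t ih =>
    cases t with
    | nil =>
      simp at h; subst h
      simp [List.intercalate]
    | cons c t' =>
      rw [intercalate_cons_cons]
      rcases List.mem_cons.mp h with h | h
      · subst h
        exact ⟨[], [Base.C] ++ List.intercalate [Base.C] (c :: t'), by simp⟩
      · exact (ih h).trans ⟨b ++ [Base.C], [], by simp⟩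

lemma infix_intercalate_mem {w : List Base} {L : List (List Base)} {l : ℕ} (hl : 1 ≤ l)
    (hw : w.length = l) (hwC : Base.C ∉ w) (hL : ∀ a ∈ L, a.length = l)
    (h : w <:+: List.intercalate [Base.C] L) : w ∈ L := by
  induction L with
  | nil =>
    exfalso
    have : List.intercalate [Base.C] ([] : List (List Base)) = [] := by
      simp [List.intercalate]
    rw [this, List.infix_nil] at h
    rw [h] at hw
    simp at hw
    omega
  | cons b t ih =>
    cases t with
    | nil =>
      have hb : List.intercalate [Base.C] [b] = b := by simp [List.intercalate]
      rw [hb] at h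
      have : w = b := h.sublist.eq_of_length (by rw [hw, hL b (by simp)])
      simp [this]
    | cons c t' =>
      rw [intercalate_cons_cons] at h
      rcases infix_split (by rw [hw, hL b (by simp)]) hwC h with heq | hinf
      · simp [heq]
      · exact List.mem_cons_of_mem _
          (ih (fun a ha => hL a (List.mem_cons_of_mem _ ha)) hinf)


lemma comp_comp (b : Base) : b.comp.comp = b := by cases b <;> rfl

lemma compStr_inj : Function.Injective compStr := by
  have key : ∀ w : List Base, compStr (compStr w) = w := by
    intro w
    simp only [compStr, List.map_map]
    have : Base.comp ∘ Base.comp = id := by funext b; exact comp_comp b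
    rw [this, List.map_id]
  intro a b h
  rw [← key a, h, key b]

lemma C_not_mem_compStr {w : List Base} (hw : ∀ b ∈ w, b = Base.A ∨ b = Base.T) :
    Base.C ∉ compStr w := by
  intro hmem
  obtain ⟨b, hb, hbc⟩ := List.mem_map.mp hmem
  rcases hw b hb with h | h <;> subst h <;> simp [Base.comp] at hbc

theorem stmt4 {U V : Type} [DecidableEq U] [DecidableEq V]
    (nbrs : U → List V)
    (hnodup : ∀ u, (nbrs u).Nodup)
    (hdeg : ∀ u, 1 ≤ (nbrs u).length ∧ (nbrs u).length ≤ 3)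
    (l : ℕ) (hl : 1 ≤ l)
    (x : V → List Base) (hinj : Function.Injective x)
    (hx : ∀ v, (x v).length = l ∧ ∀ b ∈ x v, b = Base.A ∨ b = Base.T)
    (X : Finset (List Base)) (hX : ∀ w, w ∈ X ↔ ∃ v, x v = w)
    (p : U → List Base)
    (hp : ∀ u, p u = List.intercalate [Base.C] ((nbrs u).map (fun v => compStr (x v))))
    (U' : Finset U)
    (hdec : StronglyDecodableFam X U' p (fun _ => ({Base.G, Base.C} : Finset Base)) 1) :
    ∃ V' : Finset V, V'.card = U'.card ∧
      (∀ u ∈ U', ∃! v, v ∈ V' ∧ v ∈ nbrs u) ∧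
      (∀ v ∈ V', ∃! u, u ∈ U' ∧ v ∈ nbrs u) := by
  classical
  -- membership characterizations
  have specA : ∀ u v, x v ∈ Spec X (p u) → v ∈ nbrs u := by
    intro u v hmem
    have hinf : compStr (x v) <:+: p u := (Finset.mem_filter.mp hmem).2
    rw [hp u] at hinf
    have hmem' : compStr (x v) ∈ (nbrs u).map (fun v => compStr (x v)) := by
      refine infix_intercalate_mem hl ?_ (C_not_mem_compStr (hx v).2) ?_ hinf
      · simp [compStr, (hx v).1]
      · intro a ha
        obtain ⟨v', _, hv'⟩ := List.mem_map.mp ha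
        rw [← hv']
        simp [compStr, (hx v').1]
    obtain ⟨v', hv', heq⟩ := List.mem_map.mp hmem'
    rwa [← hinj (compStr_inj heq)]
  have specB : ∀ u v, v ∈ nbrs u →
      x v ∈ SpecE X (p u) ({Base.G, Base.C} : Finset Base) := by
    intro u v hv
    refine Finset.mem_biUnion.mpr ⟨Base.G, by simp, ?_⟩
    refine Finset.mem_filter.mpr ⟨(hX (x v)).mpr ⟨v, rfl⟩, ?_⟩
    have h1 : compStr (x v) <:+: p u := by
      rw [hp u]
      exact mem_infix_intercalate (List.mem_map.mpr ⟨v, hv, rfl⟩)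
    exact h1.trans (List.prefix_append _ _).isInfix
  -- choose a distinguished neighbor for each u ∈ U'
  have hchoice : ∀ u ∈ U', ∃ v : V,
      x v ∈ (Spec X (p u)) \
        ((U'.erase u).biUnion fun j => SpecE X (p j) ({Base.G, Base.C} : Finset Base)) := by
    intro u hu
    have hcard := hdec u hu
    obtain ⟨w, hw⟩ := Finset.card_pos.mp (by exact lt_of_lt_of_le one_pos hcard)
    have hwX : w ∈ X := (Finset.mem_filter.mp (Finset.mem_sdiff.mp hw).1).1
    obtain ⟨v, hv⟩ := (hX w).mp hwX
    exact ⟨v, hv ▸ hw⟩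
  set g : {u // u ∈ U'} → V := fun u => (hchoice u.1 u.2).choose with hg
  have hgspec : ∀ u : {u // u ∈ U'},
      x (g u) ∈ (Spec X (p u.1)) \
        ((U'.erase u.1).biUnion fun j => SpecE X (p j) ({Base.G, Base.C} : Finset Base)) :=
    fun u => (hchoice u.1 u.2).choose_spec
  have hA : ∀ u : {u // u ∈ U'}, g u ∈ nbrs u.1 :=
    fun u => specA u.1 (g u) (Finset.mem_sdiff.mp (hgspec u)).1
  have hB : ∀ (u u' : {u // u ∈ U'}), u'.1 ≠ u.1 → g u ∉ nbrs u'.1 := by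
    intro u u' hne hmem
    have h2 := (Finset.mem_sdiff.mp (hgspec u)).2
    exact h2 (Finset.mem_biUnion.mpr
      ⟨u'.1, Finset.mem_erase.mpr ⟨hne, u'.2⟩, specB u'.1 (g u) hmem⟩)
  have hginj : Function.Injective g := by
    intro u u' heq
    by_contra hne
    exact hB u u' (fun h => hne (Subtype.ext h).symm) (heq ▸ hA u')
  refine ⟨U'.attach.image g, ?_, ?_, ?_⟩
  · rw [Finset.card_image_of_injective _ hginj, Finset.card_attach]
  · intro u hu
    refine ⟨g ⟨u, hu⟩, ⟨Finset.mem_image.mpr ⟨⟨u, hu⟩, Finset.mem_attach _ _, rfl⟩,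
      hA ⟨u, hu⟩⟩, ?_⟩
    rintro v ⟨hv1, hv2⟩
    obtain ⟨u'', _, hu''⟩ := Finset.mem_image.mp hv1
    subst hu''
    have : u''.1 = u := by
      by_contra hne
      exact hB u'' ⟨u, hu⟩ (fun h => hne h.symm) hv2
    rw [show u'' = ⟨u, hu⟩ from Subtype.ext this]
  · intro v hv
    obtain ⟨u'', _, hu''⟩ := Finset.mem_image.mp hv
    subst hu''
    refine ⟨u''.1, ⟨u''.2, hA u''⟩, ?_⟩
    rintro u' ⟨hu'1, hu'2⟩
    by_contra hne
    exact hB u'' ⟨u', hu'1⟩ hne hu'2
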